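/- Lindenbaum-type extension lemma: if a sequent Γ ⇒ Δ in a countable syntax L₁ is not derivable in G(FOC+J), and L₂ extends L₁ by a countably infinite set of fresh variables, then there exists a prime L₂-complete pair (Γ*, Δ*) with Γ ⊆ Γ*, Δ ⊆ Δ*, where Γ* ∪ Δ* = Form_{L₂}. -/
import Mathlib


/-- Terms: variables (named by naturals) and constant symbols. -/
inductive Tm : Type
| var : ℕ → Tm
| const : ℕ → Tm
deriving DecidableEq

/-- Formulas of the combined language: atoms, ⊥, ∧, ∨, intuitionistic and
classical implication, intuitionistic and classical universal quantifier,
and the existential quantifier. -/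
inductive Fm : Type
| atom : ℕ → List Tm → Fm
| bot : Fm
| and : Fm → Fm → Fm
| or : Fm → Fm → Fm
| impI : Fm → Fm → Fm
| impC : Fm → Fm → Fm
| allI : ℕ → Fm → Fm
| allC : ℕ → Fm → Fm
| ex : ℕ → Fm → Fm
deriving DecidableEq

def Fm.top : Fm := .impI .bot .bot
def Fm.negC (A : Fm) : Fm := .impC A .bot
def Fm.negI (A : Fm) : Fm := .impI A .bot

def Tm.fv : Tm → Set ℕ
| .var x => {x}
| .const _ => ∅

/-- Free variables of a formula. -/
def Fm.fv : Fm → Set ℕ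
| .atom _ ts => {x | ∃ t ∈ ts, x ∈ t.fv}
| .bot => ∅
| .and A B => A.fv ∪ B.fv
| .or A B => A.fv ∪ B.fv
| .impI A B => A.fv ∪ B.fv
| .impC A B => A.fv ∪ B.fv
| .allI x A => A.fv \ {x}
| .allC x A => A.fv \ {x}
| .ex x A => A.fv \ {x}

/-- Bound variables of a formula. -/
def Fm.bv : Fm → Set ℕ
| .atom _ _ => ∅
| .bot => ∅
| .and A B => A.bv ∪ B.bv
| .or A B => A.bv ∪ B.bv
| .impI A B => A.bv ∪ B.bv
| .impC A B => A.bv ∪ B.bv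
| .allI x A => insert x A.bv
| .allC x A => insert x A.bv
| .ex x A => insert x A.bv

/-- All variables (free and bound) of a formula. -/
def Fm.vars : Fm → Set ℕ
| .atom _ ts => {x | ∃ t ∈ ts, x ∈ t.fv}
| .bot => ∅
| .and A B => A.vars ∪ B.vars
| .or A B => A.vars ∪ B.vars
| .impI A B => A.vars ∪ B.vars
| .impC A B => A.vars ∪ B.vars
| .allI x A => insert x A.vars
| .allC x A => insert x A.vars
| .ex x A => insert x A.vars

def Tm.subst (x : ℕ) (u : Tm) : Tm → Tm
| .var y => if y = x then u else .var y
| .const c => .const c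

/-- Substitution of term `u` for variable `x` (under the standing assumption
that bound and free variables are disjoint, this is clash-avoiding). -/
def Fm.subst : Fm → ℕ → Tm → Fm
| .atom P ts, x, u => .atom P (ts.map (Tm.subst x u))
| .bot, _, _ => .bot
| .and A B, x, u => .and (A.subst x u) (B.subst x u)
| .or A B, x, u => .or (A.subst x u) (B.subst x u)
| .impI A B, x, u => .impI (A.subst x u) (B.subst x u)
| .impC A B, x, u => .impC (A.subst x u) (B.subst x u)
| .allI y A, x, u => .allI y (if y = x then A else A.subst x u)
| .allC y A, x, u => .allC y (if y = x then A else A.subst x u)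
| .ex y A, x, u => .ex y (if y = x then A else A.subst x u)

/-- Persistent formulas: atoms, →ᵢ-formulas and ∀ᵢ-formulas. -/
def Fm.Persistent : Fm → Prop
| .atom _ _ => True
| .impI _ _ => True
| .allI _ _ => True
| _ => False

/-- Purely intuitionistic formulas (no →_c, no ∀_c). -/
def Fm.IsJ : Fm → Prop
| .atom _ _ => True
| .bot => True
| .and A B => A.IsJ ∧ B.IsJ
| .or A B => A.IsJ ∧ B.IsJ
| .impI A B => A.IsJ ∧ B.IsJ
| .impC _ _ => False
| .allI _ A => A.IsJ
| .allC _ _ => False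
| .ex _ A => A.IsJ

/-- Purely classical formulas (no →ᵢ, no ∀ᵢ). -/
def Fm.IsC : Fm → Prop
| .atom _ _ => True
| .bot => True
| .and A B => A.IsC ∧ B.IsC
| .or A B => A.IsC ∧ B.IsC
| .impI _ _ => False
| .impC A B => A.IsC ∧ B.IsC
| .allI _ _ => False
| .allC _ A => A.IsC
| .ex _ A => A.IsC

/-- A raw Kripke structure for the combined first-order language. -/
structure KModel (U : Type) where
  W : Type
  R : W → W → Prop
  D : W → Set U
  cI : ℕ → U
  V : ℕ → W → Set (List U)

/-- The conditions making a raw structure an intuitionistic Kripke model: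
`R` is a preorder, domains are nonempty, monotone, with nonempty
intersection, constants are rigid (interpreted in every domain), and the
predicate valuation is monotone (hereditary) along `R`. -/
structure KModel.IsKripke {U : Type} (M : KModel U) : Prop where
  wNonempty : Nonempty M.W
  refl : ∀ w, M.R w w
  trans : ∀ {w v u}, M.R w v → M.R v u → M.R w u
  dNonempty : ∀ w, (M.D w).Nonempty
  dMono : ∀ {w v}, M.R w v → M.D w ⊆ M.D v
  dInter : (⋂ w, M.D w).Nonempty
  cMem : ∀ c w, M.cI c ∈ M.D w
  vMono : ∀ P {w v}, M.R w v → M.V P w ⊆ M.V P v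

def Tm.val {U : Type} (M : KModel U) (g : ℕ → U) : Tm → U
| .var x => g x
| .const c => M.cI c

/-- Satisfaction of a formula at a world under an assignment. -/
def Fm.Sat {U : Type} (M : KModel U) : Fm → M.W → (ℕ → U) → Prop
| .atom P ts, w, g => ts.map (Tm.val M g) ∈ M.V P w
| .bot, _, _ => False
| .and A B, w, g => A.Sat M w g ∧ B.Sat M w g
| .or A B, w, g => A.Sat M w g ∨ B.Sat M w g
| .impI A B, w, g => ∀ v, M.R w v → A.Sat M v g → B.Sat M v g
| .impC A B, w, g => A.Sat M w g → B.Sat M w g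
| .allI x A, w, g => ∀ v, M.R w v → ∀ d ∈ M.D v, A.Sat M v (Function.update g x d)
| .allC x A, w, g => ∀ d ∈ M.D w, A.Sat M w (Function.update g x d)
| .ex x A, w, g => ∃ d ∈ M.D w, A.Sat M w (Function.update g x d)

/-- Multi-succedent semantic consequence: at every world of every Kripke
model, under any assignment into the domain, if all of `Γ` holds then some
member of `Δ` holds. -/
def Conseq (Γ Δ : List Fm) : Prop :=
  ∀ (U : Type) (M : KModel U), M.IsKripke → ∀ (w : M.W) (g : ℕ → U),
    (∀ x, g x ∈ M.D w) → (∀ A ∈ Γ, A.Sat M w g) → ∃ B ∈ Δ, B.Sat M w g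

/-- The sequent calculus G(FOC+J). -/
inductive Der : List Fm → List Fm → Prop
| id (A : Fm) : Der [A] [A]
| botL : Der [.bot] []
| perm {Γ Γ' Δ Δ'} : Γ.Perm Γ' → Δ.Perm Δ' → Der Γ Δ → Der Γ' Δ'
| wL {Γ Δ} (A) : Der Γ Δ → Der (A :: Γ) Δ
| wR {Γ Δ} (A) : Der Γ Δ → Der Γ (A :: Δ)
| cL {Γ Δ A} : Der (A :: A :: Γ) Δ → Der (A :: Γ) Δ
| cR {Γ Δ A} : Der Γ (A :: A :: Δ) → Der Γ (A :: Δ)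
| cut {Γ Δ P S A} : Der Γ (A :: Δ) → Der (A :: P) S → Der (Γ ++ P) (Δ ++ S)
| impIR {Θ A B} : (∀ C ∈ Θ, Fm.Persistent C) →
    Der (A :: Θ) [B] → Der Θ [.impI A B]
| impIL {Γ₁ Γ₂ Δ₁ Δ₂ A B} : Der Γ₁ (A :: Δ₁) → Der (B :: Γ₂) Δ₂ →
    Der (.impI A B :: (Γ₁ ++ Γ₂)) (Δ₁ ++ Δ₂)
| impCR {Γ Δ A B} : Der (A :: Γ) (B :: Δ) → Der Γ (.impC A B :: Δ)
| impCL {Γ₁ Γ₂ Δ₁ Δ₂ A B} : Der Γ₁ (A :: Δ₁) → Der (B :: Γ₂) Δ₂ →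
    Der (.impC A B :: (Γ₁ ++ Γ₂)) (Δ₁ ++ Δ₂)
| andR {Γ Δ A B} : Der Γ (A :: Δ) → Der Γ (B :: Δ) → Der Γ (.and A B :: Δ)
| andL1 {Γ Δ A B} : Der (A :: Γ) Δ → Der (.and A B :: Γ) Δ
| andL2 {Γ Δ A B} : Der (B :: Γ) Δ → Der (.and A B :: Γ) Δ
| orR1 {Γ Δ A B} : Der Γ (A :: Δ) → Der Γ (.or A B :: Δ)
| orR2 {Γ Δ A B} : Der Γ (B :: Δ) → Der Γ (.or A B :: Δ)
| orL {Γ Δ A B} : Der (A :: Γ) Δ → Der (B :: Γ) Δ → Der (.or A B :: Γ) Δ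
| allIR {Θ x z A} : (∀ C ∈ Θ, Fm.Persistent C) →
    (∀ C ∈ Θ, z ∉ Fm.fv C) → z ∉ Fm.fv (.allI x A) → z ∉ Fm.bv A →
    Der Θ [A.subst x (.var z)] → Der Θ [.allI x A]
| allIL {Γ Δ x A} (t : Tm) : (∀ y ∈ t.fv, y ∉ Fm.bv A) →
    Der (A.subst x t :: Γ) Δ → Der (.allI x A :: Γ) Δ
| allCR {Γ Δ x z A} : (∀ C ∈ Γ, z ∉ Fm.fv C) → (∀ C ∈ Δ, z ∉ Fm.fv C) →
    z ∉ Fm.fv (.allC x A) → z ∉ Fm.bv A →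
    Der Γ (A.subst x (.var z) :: Δ) → Der Γ (.allC x A :: Δ)
| allCL {Γ Δ x A} (t : Tm) : (∀ y ∈ t.fv, y ∉ Fm.bv A) →
    Der (A.subst x t :: Γ) Δ → Der (.allC x A :: Γ) Δ
| exR {Γ Δ x A} (t : Tm) : (∀ y ∈ t.fv, y ∉ Fm.bv A) →
    Der Γ (A.subst x t :: Δ) → Der Γ (.ex x A :: Δ)
| exL {Γ Δ x z A} : (∀ C ∈ Γ, z ∉ Fm.fv C) → (∀ C ∈ Δ, z ∉ Fm.fv C) →
    z ∉ Fm.fv (.ex x A) → z ∉ Fm.bv A →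
    Der (A.subst x (.var z) :: Γ) Δ → Der (.ex x A :: Γ) Δ

/-- A term of syntax `L` (a syntax is identified with its set of variables). -/
def TmInSyn (L : Set ℕ) (t : Tm) : Prop := t.fv ⊆ L

/-- An `L`-formula: all its variables belong to the syntax `L`. -/
def InSyn (L : Set ℕ) (A : Fm) : Prop := A.vars ⊆ L

/-- Derivability for (possibly infinite) sets of formulas: some finite
sub-sequent is derivable in G(FOC+J). -/
def SetDer (Γ Δ : Set Fm) : Prop :=
  ∃ G D : List Fm, (∀ A ∈ G, A ∈ Γ) ∧ (∀ A ∈ D, A ∈ Δ) ∧ Der G D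

/-- A prime pair with respect to a syntax `L`. -/
structure PrimePair (L : Set ℕ) (Γ Δ : Set Fm) : Prop where
  syntaxL : ∀ A ∈ Γ ∪ Δ, InSyn L A
  theory : ∀ A, InSyn L A → SetDer Γ {A} → A ∈ Γ
  underiv : ¬ SetDer Γ Δ
  prime : ∀ A B, Fm.or A B ∈ Γ → A ∈ Γ ∨ B ∈ Γ
  exProp : ∀ x A, Fm.ex x A ∈ Γ → ∃ t : Tm, TmInSyn L t ∧ A.subst x t ∈ Γ
  allCProp : ∀ x A, Fm.allC x A ∈ Δ → ∃ t : Tm, TmInSyn L t ∧ A.subst x t ∈ Δ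

/-- `L`-completeness of a pair: every `L`-formula is in `Γ` or in `Δ`. -/
def LComplete (L : Set ℕ) (Γ Δ : Set Fm) : Prop := Γ ∪ Δ = {A | InSyn L A}

/-! ### Enumeration of formulas -/

def tmCode : Tm → ℕ
| .var x => 2 * x
| .const c => 2 * c + 1

def tmDec (n : ℕ) : Tm := if n % 2 = 0 then .var (n / 2) else .const (n / 2)

theorem tmDec_code (t : Tm) : tmDec (tmCode t) = t := by
  cases t with
  | var x => simp [tmCode, tmDec, Nat.mul_div_cancel_left, Nat.mul_mod_right]
  | const c => simp [tmCode, tmDec, Nat.add_mul_mod_self_left, Nat.mul_add_div]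
    <;> omega

def listTmCode (ts : List Tm) : ℕ := Encodable.encode (ts.map tmCode)

noncomputable def listTmDec (n : ℕ) : List Tm :=
  ((Encodable.decode (α := List ℕ) n).getD []).map tmDec

theorem listTmDec_code (ts : List Tm) : listTmDec (listTmCode ts) = ts := by
  simp [listTmDec, listTmCode, Encodable.encodek, List.map_map, Function.comp,
    tmDec_code]
  exact (List.map_congr_left (fun t _ => tmDec_code t)).trans (List.map_id ts)

def fmCode : Fm → ℕ
| .atom P ts => Nat.pair 0 (Nat.pair P (listTmCode ts))
| .bot => Nat.pair 1 0
| .and A B => Nat.pair 2 (Nat.pair (fmCode A) (fmCode B))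
| .or A B => Nat.pair 3 (Nat.pair (fmCode A) (fmCode B))
| .impI A B => Nat.pair 4 (Nat.pair (fmCode A) (fmCode B))
| .impC A B => Nat.pair 5 (Nat.pair (fmCode A) (fmCode B))
| .allI x A => Nat.pair 6 (Nat.pair x (fmCode A))
| .allC x A => Nat.pair 7 (Nat.pair x (fmCode A))
| .ex x A => Nat.pair 8 (Nat.pair x (fmCode A))

def fmDepth : Fm → ℕ
| .atom _ _ => 0
| .bot => 0
| .and A B => max (fmDepth A) (fmDepth B) + 1
| .or A B => max (fmDepth A) (fmDepth B) + 1
| .impI A B => max (fmDepth A) (fmDepth B) + 1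
| .impC A B => max (fmDepth A) (fmDepth B) + 1
| .allI _ A => fmDepth A + 1
| .allC _ A => fmDepth A + 1
| .ex _ A => fmDepth A + 1

noncomputable def fmDec : ℕ → ℕ → Fm
| 0, _ => .bot
| f+1, n =>
  match n.unpair.1, n.unpair.2 with
  | 0, m => .atom m.unpair.1 (listTmDec m.unpair.2)
  | 1, _ => .bot
  | 2, m => .and (fmDec f m.unpair.1) (fmDec f m.unpair.2)
  | 3, m => .or (fmDec f m.unpair.1) (fmDec f m.unpair.2)
  | 4, m => .impI (fmDec f m.unpair.1) (fmDec f m.unpair.2)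
  | 5, m => .impC (fmDec f m.unpair.1) (fmDec f m.unpair.2)
  | 6, m => .allI m.unpair.1 (fmDec f m.unpair.2)
  | 7, m => .allC m.unpair.1 (fmDec f m.unpair.2)
  | _+8, m => .ex m.unpair.1 (fmDec f m.unpair.2)

theorem fmDec_code : ∀ (f : ℕ) (A : Fm), fmDepth A < f → fmDec f (fmCode A) = A := by
  intro f
  induction f with
  | zero => intro A hA; omega
  | succ f ih =>
    intro A hA
    cases A <;>
      simp_all [fmDec, fmCode, fmDepth, Nat.unpair_pair, listTmDec_code] <;>
      (try constructor) <;> apply ih <;> omega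

noncomputable def fmEnum (k : ℕ) : Fm := fmDec k.unpair.1 k.unpair.2

theorem fmEnum_surj : Function.Surjective fmEnum := by
  intro A
  exact ⟨Nat.pair (fmDepth A + 1) (fmCode A), by
    simp [fmEnum, Nat.unpair_pair]; exact fmDec_code _ _ (Nat.lt_succ_self _)⟩

/-! ### Structural lemmas for `Der` -/

theorem der_weakL {G D : List Fm} (E : List Fm) (h : Der G D) : Der (E ++ G) D := by
  induction E with
  | nil => simpa
  | cons A E ih => exact Der.wL A ih

theorem der_weakR {G D : List Fm} (E : List Fm) (h : Der G D) : Der G (E ++ D) := by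
  induction E with
  | nil => simpa
  | cons A E ih => exact Der.wR A ih

theorem der_contract_memL {G D : List Fm} {A : Fm} (h : Der (A :: G) D) (hA : A ∈ G) :
    Der G D := by
  have hp : G.Perm (A :: G.erase A) := List.perm_cons_erase hA
  have h2 : Der (A :: A :: G.erase A) D := Der.perm (hp.cons A) (List.Perm.refl _) h
  exact Der.perm hp.symm (List.Perm.refl _) (Der.cL h2)

theorem der_contract_memR {G D : List Fm} {A : Fm} (h : Der G (A :: D)) (hA : A ∈ D) :
    Der G D := by
  have hp : D.Perm (A :: D.erase A) := List.perm_cons_erase hA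
  have h2 : Der G (A :: A :: D.erase A) := Der.perm (List.Perm.refl _) (hp.cons A) h
  exact Der.perm (List.Perm.refl _) hp.symm (Der.cR h2)

theorem der_dropL {D : List Fm} (G G' : List Fm) (h : Der (G' ++ G) D)
    (hs : ∀ A ∈ G, A ∈ G') : Der G' D := by
  induction G with
  | nil => simpa using h
  | cons A G ih =>
    have h1 : Der (A :: (G' ++ G)) D :=
      Der.perm List.perm_middle (List.Perm.refl _) h
    have h2 : Der (G' ++ G) D :=
      der_contract_memL h1 (List.mem_append.2 (Or.inl (hs A (by simp))))
    exact ih h2 (fun B hB => hs B (by simp [hB]))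

theorem der_dropR {G : List Fm} (D D' : List Fm) (h : Der G (D' ++ D))
    (hs : ∀ A ∈ D, A ∈ D') : Der G D' := by
  induction D with
  | nil => simpa using h
  | cons A D ih =>
    have h1 : Der G (A :: (D' ++ D)) :=
      Der.perm (List.Perm.refl _) List.perm_middle h
    have h2 : Der G (D' ++ D) :=
      der_contract_memR h1 (List.mem_append.2 (Or.inl (hs A (by simp))))
    exact ih h2 (fun B hB => hs B (by simp [hB]))

theorem der_subset {G D G' D' : List Fm} (h : Der G D)
    (h1 : ∀ A ∈ G, A ∈ G') (h2 : ∀ A ∈ D, A ∈ D') : Der G' D' := by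
  have hw : Der (G' ++ G) (D' ++ D) := der_weakR D' (der_weakL G' h)
  exact der_dropL G G' (der_dropR D D' hw h2) h1

theorem setDer_mono {Γ Δ Γ' Δ' : Set Fm} (h : SetDer Γ Δ) (h1 : Γ ⊆ Γ') (h2 : Δ ⊆ Δ') :
    SetDer Γ' Δ' := by
  obtain ⟨G, D, hG, hD, hd⟩ := h
  exact ⟨G, D, fun A hA => h1 (hG A hA), fun A hA => h2 (hD A hA), hd⟩

theorem setDer_cut {Γ Δ : Set Fm} {A : Fm} (h1 : SetDer Γ (insert A Δ))
    (h2 : SetDer (insert A Γ) Δ) : SetDer Γ Δ := by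
  classical
  obtain ⟨G, D, hG, hD, hd⟩ := h1
  obtain ⟨G₁, D₁, hG₁, hD₁, hd₁⟩ := h2
  have hd' : Der G (A :: D.filter (fun C => C ≠ A)) := by
    refine der_subset hd (fun C hC => hC) (fun C hC => ?_)
    by_cases hCA : C = A
    · simp [hCA]
    · simp [List.mem_filter, hC, hCA]
  have hd₁' : Der (A :: G₁.filter (fun C => C ≠ A)) D₁ := by
    refine der_subset hd₁ (fun C hC => ?_) (fun C hC => hC)
    by_cases hCA : C = A
    · simp [hCA]
    · simp [List.mem_filter, hC, hCA]
  refine ⟨_, _, ?_, ?_, Der.cut hd' hd₁'⟩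
  · intro C hC
    rcases List.mem_append.1 hC with hC | hC
    · exact hG C hC
    · have := List.mem_filter.1 hC
      rcases hG₁ C this.1 with h | h
      · exact absurd h (by simpa using this.2)
      · exact h
  · intro C hC
    rcases List.mem_append.1 hC with hC | hC
    · have := List.mem_filter.1 hC
      rcases hD C this.1 with h | h
      · exact absurd h (by simpa using this.2)
      · exact h
    · exact hD₁ C hC

theorem der_or_pair (A B : Fm) : Der [Fm.or A B] [A, B] := by
  have hA : Der [A] [A, B] := by
    have := Der.wR B (Der.id A)
    exact Der.perm (List.Perm.refl _) (List.Perm.swap A B []) this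
  have hB : Der [B] [A, B] := Der.wR A (Der.id B)
  exact Der.orL hA hB

/-! ### Variables -/

theorem tm_fv_finite (t : Tm) : t.fv.Finite := by
  cases t with
  | var x => exact Set.finite_singleton x
  | const c => exact Set.finite_empty

theorem fm_vars_finite (A : Fm) : A.vars.Finite := by
  induction A with
  | atom P ts =>
    have h : Fm.vars (.atom P ts) = ⋃ t ∈ {t | t ∈ ts}, t.fv := by
      ext x; simp [Fm.vars]
    rw [h]
    exact (List.finite_toSet ts).biUnion (fun t _ => tm_fv_finite t)
  | bot => exact Set.finite_empty
  | and A B ihA ihB => exact ihA.union ihB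
  | or A B ihA ihB => exact ihA.union ihB
  | impI A B ihA ihB => exact ihA.union ihB
  | impC A B ihA ihB => exact ihA.union ihB
  | allI x A ih => exact ih.insert x
  | allC x A ih => exact ih.insert x
  | ex x A ih => exact ih.insert x

theorem fm_fv_subset_vars (A : Fm) : A.fv ⊆ A.vars := by
  induction A with
  | atom P ts => exact subset_rfl
  | bot => exact subset_rfl
  | and A B ihA ihB => exact Set.union_subset_union ihA ihB
  | or A B ihA ihB => exact Set.union_subset_union ihA ihB
  | impI A B ihA ihB => exact Set.union_subset_union ihA ihB
  | impC A B ihA ihB => exact Set.union_subset_union ihA ihB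
  | allI x A ih => exact fun y hy => Set.mem_insert_of_mem x (ih hy.1)
  | allC x A ih => exact fun y hy => Set.mem_insert_of_mem x (ih hy.1)
  | ex x A ih => exact fun y hy => Set.mem_insert_of_mem x (ih hy.1)

theorem fm_bv_subset_vars (A : Fm) : A.bv ⊆ A.vars := by
  induction A with
  | atom P ts => simp [Fm.bv]
  | bot => exact subset_rfl
  | and A B ihA ihB => exact Set.union_subset_union ihA ihB
  | or A B ihA ihB => exact Set.union_subset_union ihA ihB
  | impI A B ihA ihB => exact Set.union_subset_union ihA ihB
  | impC A B ihA ihB => exact Set.union_subset_union ihA ihB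
  | allI x A ih => exact Set.insert_subset_insert ih
  | allC x A ih => exact Set.insert_subset_insert ih
  | ex x A ih => exact Set.insert_subset_insert ih

theorem tm_subst_fv (x : ℕ) (t u : Tm) : (Tm.subst x t u).fv ⊆ u.fv ∪ t.fv := by
  cases u with
  | var z =>
    by_cases hz : z = x
    · simp [Tm.subst, hz]
    · simp [Tm.subst, hz]
  | const c => simp [Tm.subst, Tm.fv]

theorem fm_subst_vars (A : Fm) (x : ℕ) (t : Tm) :
    (A.subst x t).vars ⊆ A.vars ∪ t.fv := by
  induction A with
  | atom P ts =>
    intro y hy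
    simp only [Fm.subst, Fm.vars, Set.mem_setOf_eq, List.mem_map] at hy
    obtain ⟨u, ⟨u₀, hu₀, rfl⟩, hyu⟩ := hy
    rcases tm_subst_fv x t u₀ hyu with h | h
    · exact Or.inl ⟨u₀, hu₀, h⟩
    · exact Or.inr h
  | bot => simp [Fm.subst, Fm.vars]
  | and A B ihA ihB =>
    intro y hy
    rcases hy with hy | hy
    · rcases ihA hy with h | h
      · exact Or.inl (Or.inl h)
      · exact Or.inr h
    · rcases ihB hy with h | h
      · exact Or.inl (Or.inr h)
      · exact Or.inr h
  | or A B ihA ihB =>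
    intro y hy
    rcases hy with hy | hy
    · rcases ihA hy with h | h
      · exact Or.inl (Or.inl h)
      · exact Or.inr h
    · rcases ihB hy with h | h
      · exact Or.inl (Or.inr h)
      · exact Or.inr h
  | impI A B ihA ihB =>
    intro y hy
    rcases hy with hy | hy
    · rcases ihA hy with h | h
      · exact Or.inl (Or.inl h)
      · exact Or.inr h
    · rcases ihB hy with h | h
      · exact Or.inl (Or.inr h)
      · exact Or.inr h
  | impC A B ihA ihB =>
    intro y hy
    rcases hy with hy | hy
    · rcases ihA hy with h | h
      · exact Or.inl (Or.inl h)
      · exact Or.inr h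
    · rcases ihB hy with h | h
      · exact Or.inl (Or.inr h)
      · exact Or.inr h
  | allI z A ih =>
    intro y hy
    simp only [Fm.subst, Fm.vars] at hy ⊢
    by_cases hzx : z = x
    · simp only [hzx, if_pos rfl] at hy
      exact Or.inl (hzx ▸ hy)
    · simp only [if_neg hzx] at hy
      rcases hy with rfl | hy
      · exact Or.inl (Set.mem_insert _ _)
      · rcases ih hy with h | h
        · exact Or.inl (Set.mem_insert_of_mem _ h)
        · exact Or.inr h
  | allC z A ih =>
    intro y hy
    simp only [Fm.subst, Fm.vars] at hy ⊢
    by_cases hzx : z = x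
    · simp only [hzx, if_pos rfl] at hy
      exact Or.inl (hzx ▸ hy)
    · simp only [if_neg hzx] at hy
      rcases hy with rfl | hy
      · exact Or.inl (Set.mem_insert _ _)
      · rcases ih hy with h | h
        · exact Or.inl (Set.mem_insert_of_mem _ h)
        · exact Or.inr h
  | ex z A ih =>
    intro y hy
    simp only [Fm.subst, Fm.vars] at hy ⊢
    by_cases hzx : z = x
    · simp only [hzx, if_pos rfl] at hy
      exact Or.inl (hzx ▸ hy)
    · simp only [if_neg hzx] at hy
      rcases hy with rfl | hy
      · exact Or.inl (Set.mem_insert _ _)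
      · rcases ih hy with h | h
        · exact Or.inl (Set.mem_insert_of_mem _ h)
        · exact Or.inr h

/-! ### Key underivability-preservation lemmas -/

theorem step_ex {Γ Δ : Set Fm} {x z : ℕ} {B : Fm}
    (hund : ¬ SetDer (insert (Fm.ex x B) Γ) Δ)
    (hzΓ : ∀ C ∈ Γ, z ∉ C.vars) (hzΔ : ∀ C ∈ Δ, z ∉ C.vars)
    (hzA : z ∉ (Fm.ex x B).vars) :
    ¬ SetDer (insert (Fm.ex x B) (insert (B.subst x (.var z)) Γ)) Δ := by
  classical
  rintro ⟨G, D, hG, hD, hd⟩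
  set A := Fm.ex x B with hAdef
  set Bz := B.subst x (.var z) with hBzdef
  set G₀ := G.filter (fun C => C ≠ A ∧ C ≠ Bz) with hG₀def
  have hG₀mem : ∀ C ∈ G₀, C ∈ Γ := by
    intro C hC
    have h := List.mem_filter.1 hC
    have h2 : C ≠ A ∧ C ≠ Bz := by simpa using h.2
    rcases hG C h.1 with h3 | h3 | h3
    · exact absurd h3 h2.1
    · exact absurd h3 h2.2
    · exact h3
  have hd1 : Der (Bz :: A :: G₀) D := by
    refine der_subset hd (fun C hC => ?_) (fun C hC => hC)
    by_cases h1 : C = Bz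
    · simp [h1]
    · by_cases h2 : C = A
      · simp [h2]
      · have : C ∈ G₀ := by
          rw [hG₀def, List.mem_filter]; exact ⟨hC, by simp [h1, h2]⟩
        simp [this]
  have hzfv : ∀ C : Fm, C ∈ Γ → z ∉ C.fv :=
    fun C hC hz => hzΓ C hC (fm_fv_subset_vars C hz)
  have hd2 : Der (A :: A :: G₀) D := by
    refine Der.exL ?_ ?_ ?_ ?_ hd1
    · intro C hC
      rcases List.mem_cons.1 hC with rfl | hC
      · exact fun hz => hzA (fm_fv_subset_vars _ hz)
      · exact hzfv C (hG₀mem C hC)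
    · exact fun C hC hz => hzΔ C (hD C hC) (fm_fv_subset_vars C hz)
    · exact fun hz => hzA (fm_fv_subset_vars _ hz)
    · intro hz
      exact hzA (Set.mem_insert_of_mem x (fm_bv_subset_vars B hz))
  have hd3 : Der (A :: G₀) D := Der.cL hd2
  exact hund ⟨A :: G₀, D, by
    intro C hC
    rcases List.mem_cons.1 hC with rfl | hC
    · exact Set.mem_insert _ _
    · exact Set.mem_insert_of_mem _ (hG₀mem C hC), hD, hd3⟩

theorem step_allC {Γ Δ : Set Fm} {x z : ℕ} {B : Fm}
    (hund : ¬ SetDer Γ (insert (Fm.allC x B) Δ))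
    (hzΓ : ∀ C ∈ Γ, z ∉ C.vars) (hzΔ : ∀ C ∈ Δ, z ∉ C.vars)
    (hzA : z ∉ (Fm.allC x B).vars) :
    ¬ SetDer Γ (insert (Fm.allC x B) (insert (B.subst x (.var z)) Δ)) := by
  classical
  rintro ⟨G, D, hG, hD, hd⟩
  set A := Fm.allC x B with hAdef
  set Bz := B.subst x (.var z) with hBzdef
  set D₀ := D.filter (fun C => C ≠ A ∧ C ≠ Bz) with hD₀def
  have hD₀mem : ∀ C ∈ D₀, C ∈ Δ := by
    intro C hC
    have h := List.mem_filter.1 hC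
    have h2 : C ≠ A ∧ C ≠ Bz := by simpa using h.2
    rcases hD C h.1 with h3 | h3 | h3
    · exact absurd h3 h2.1
    · exact absurd h3 h2.2
    · exact h3
  have hd1 : Der G (Bz :: A :: D₀) := by
    refine der_subset hd (fun C hC => hC) (fun C hC => ?_)
    by_cases h1 : C = Bz
    · simp [h1]
    · by_cases h2 : C = A
      · simp [h2]
      · have : C ∈ D₀ := by
          rw [hD₀def, List.mem_filter]; exact ⟨hC, by simp [h1, h2]⟩
        simp [this]
  have hd2 : Der G (A :: A :: D₀) := by
    refine Der.allCR ?_ ?_ ?_ ?_ hd1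
    · exact fun C hC hz => hzΓ C (hG C hC) (fm_fv_subset_vars C hz)
    · intro C hC
      rcases List.mem_cons.1 hC with rfl | hC
      · exact fun hz => hzA (fm_fv_subset_vars _ hz)
      · exact fun hz => hzΔ C (hD₀mem C hC) (fm_fv_subset_vars C hz)
    · exact fun hz => hzA (fm_fv_subset_vars _ hz)
    · intro hz
      exact hzA (Set.mem_insert_of_mem x (fm_bv_subset_vars B hz))
  have hd3 : Der G (A :: D₀) := Der.cR hd2
  exact hund ⟨G, A :: D₀, hG, by
    intro C hC
    rcases List.mem_cons.1 hC with rfl | hC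
    · exact Set.mem_insert _ _
    · exact Set.mem_insert_of_mem _ (hD₀mem C hC), hd3⟩

/-! ### The construction -/

def UsedVars (Γ Δ : Set Fm) : Set ℕ := {x | ∃ B ∈ Γ ∪ Δ, x ∈ B.vars}

open Classical in
noncomputable def freshVar (L₂ : Set ℕ) (Γ Δ : Set Fm) (A : Fm) : ℕ :=
  if h : (L₂ \ (UsedVars Γ Δ ∪ A.vars)).Nonempty then h.choose else 0

theorem freshVar_spec {L₂ : Set ℕ} {Γ Δ : Set Fm} {A : Fm}
    (h : (L₂ \ (UsedVars Γ Δ ∪ A.vars)).Nonempty) :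
    freshVar L₂ Γ Δ A ∈ L₂ \ (UsedVars Γ Δ ∪ A.vars) := by
  rw [freshVar, dif_pos h]; exact h.choose_spec

open Classical in
noncomputable def step (L₂ : Set ℕ) (S : Set Fm × Set Fm) (A : Fm) : Set Fm × Set Fm :=
  if InSyn L₂ A then
    if SetDer (insert A S.1) S.2 then
      match A with
      | .allC x B =>
          (S.1, insert A (insert (B.subst x (.var (freshVar L₂ S.1 S.2 A))) S.2))
      | _ => (S.1, insert A S.2)
    else
      match A with
      | .ex x B =>
          (insert A (insert (B.subst x (.var (freshVar L₂ S.1 S.2 A))) S.1), S.2)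
      | _ => (insert A S.1, S.2)
  else S

theorem subset_insert2 {α : Type*} (a b : α) (s : Set α) : s ⊆ insert a (insert b s) :=
  (Set.subset_insert b s).trans (Set.subset_insert a _)

theorem step_mono1 (L₂ : Set ℕ) (S : Set Fm × Set Fm) (A : Fm) :
    S.1 ⊆ (step L₂ S A).1 := by
  by_cases h1 : InSyn L₂ A <;> by_cases h2 : SetDer (insert A S.1) S.2 <;>
    cases A <;>
    simp only [step, h1, h2, if_true, if_false, ite_true, ite_false] <;>
    first
      | exact subset_rfl
      | exact Set.subset_insert _ _
      | exact subset_insert2 _ _ _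

theorem step_mono2 (L₂ : Set ℕ) (S : Set Fm × Set Fm) (A : Fm) :
    S.2 ⊆ (step L₂ S A).2 := by
  by_cases h1 : InSyn L₂ A <;> by_cases h2 : SetDer (insert A S.1) S.2 <;>
    cases A <;>
    simp only [step, h1, h2, if_true, if_false, ite_true, ite_false] <;>
    first
      | exact subset_rfl
      | exact Set.subset_insert _ _
      | exact subset_insert2 _ _ _

theorem mem_step (L₂ : Set ℕ) (S : Set Fm × Set Fm) (A : Fm) (hA : InSyn L₂ A) :
    A ∈ (step L₂ S A).1 ∪ (step L₂ S A).2 := by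
  by_cases h2 : SetDer (insert A S.1) S.2 <;>
    cases A <;>
    simp only [step, hA, h2, if_true, if_false, ite_true, ite_false] <;>
    first
      | exact Or.inl (Set.mem_insert _ _)
      | exact Or.inr (Set.mem_insert _ _)

noncomputable def stages (L₂ : Set ℕ) (e : ℕ → Fm) (Γ Δ : Set Fm) : ℕ → Set Fm × Set Fm
| 0 => (Γ, Δ)
| n + 1 => step L₂ (stages L₂ e Γ Δ n) (e n)

theorem stages_mono1 (L₂ : Set ℕ) (e : ℕ → Fm) (Γ Δ : Set Fm) {m n : ℕ} (h : m ≤ n) :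
    (stages L₂ e Γ Δ m).1 ⊆ (stages L₂ e Γ Δ n).1 := by
  induction n with
  | zero => rw [Nat.le_zero.1 h]
  | succ n ih =>
    rcases Nat.lt_or_ge m (n+1) with h' | h'
    · exact (ih (Nat.lt_succ_iff.1 h')).trans (step_mono1 _ _ _)
    · rw [Nat.le_antisymm h h']
theorem stages_mono2 (L₂ : Set ℕ) (e : ℕ → Fm) (Γ Δ : Set Fm) {m n : ℕ} (h : m ≤ n) :
    (stages L₂ e Γ Δ m).2 ⊆ (stages L₂ e Γ Δ n).2 := by
  induction n with
  | zero => rw [Nat.le_zero.1 h]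
  | succ n ih =>
    rcases Nat.lt_or_ge m (n+1) with h' | h'
    · exact (ih (Nat.lt_succ_iff.1 h')).trans (step_mono2 _ _ _)
    · rw [Nat.le_antisymm h h']

/-! ### The invariant -/

structure StInv (L₂ : Set ℕ) (Γ Δ : Set Fm) (S : Set Fm × Set Fm) : Prop where
  syn : ∀ A ∈ S.1 ∪ S.2, InSyn L₂ A
  fin : ∃ F : Set Fm, F.Finite ∧ S.1 ⊆ Γ ∪ F ∧ S.2 ⊆ Δ ∪ F
  und : ¬ SetDer S.1 S.2

theorem fresh_ne {L₁ L₂ : Set ℕ} {Γ Δ : Set Fm}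
    (hsub : L₁ ⊆ L₂) (hfresh : (L₂ \ L₁).Infinite)
    (hΓ : ∀ A ∈ Γ, InSyn L₁ A) (hΔ : ∀ A ∈ Δ, InSyn L₁ A)
    {S : Set Fm × Set Fm} (hS : StInv L₂ Γ Δ S) (A : Fm) :
    (L₂ \ (UsedVars S.1 S.2 ∪ A.vars)).Nonempty := by
  obtain ⟨F, hF, hSF1, hSF2⟩ := hS.fin
  have hvarsF : (⋃ B ∈ F, Fm.vars B).Finite :=
    hF.biUnion (fun B _ => fm_vars_finite B)
  have hU : UsedVars S.1 S.2 ⊆ L₁ ∪ ⋃ B ∈ F, Fm.vars B := by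
    rintro y ⟨B, hB, hy⟩
    rcases hB with hB | hB
    · rcases hSF1 hB with hB' | hB'
      · exact Or.inl (hΓ B hB' hy)
      · exact Or.inr (Set.mem_biUnion hB' hy)
    · rcases hSF2 hB with hB' | hB'
      · exact Or.inl (hΔ B hB' hy)
      · exact Or.inr (Set.mem_biUnion hB' hy)
  have hsubset : (L₂ \ L₁) \ ((⋃ B ∈ F, Fm.vars B) ∪ A.vars) ⊆
      L₂ \ (UsedVars S.1 S.2 ∪ A.vars) := by
    rintro y ⟨⟨hyL₂, hyL₁⟩, hyn⟩
    refine ⟨hyL₂, ?_⟩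
    rintro (hy | hy)
    · rcases hU hy with h | h
      · exact hyL₁ h
      · exact hyn (Or.inl h)
    · exact hyn (Or.inr hy)
  exact ((hfresh.diff (hvarsF.union (fm_vars_finite A))).nonempty).mono hsubset

theorem inv_insert_right {L₂ : Set ℕ} {Γ Δ : Set Fm} {S : Set Fm × Set Fm}
    (hS : StInv L₂ Γ Δ S) {A : Fm} (hA : InSyn L₂ A)
    (hund : ¬ SetDer S.1 (insert A S.2)) :
    StInv L₂ Γ Δ (S.1, insert A S.2) := by
  refine ⟨?_, ?_, hund⟩
  · rintro C (hC | hC)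
    · exact hS.syn C (Or.inl hC)
    · rcases hC with rfl | hC
      · exact hA
      · exact hS.syn C (Or.inr hC)
  · obtain ⟨F, hF, h1, h2⟩ := hS.fin
    refine ⟨insert A F, hF.insert A, h1.trans ?_, ?_⟩
    · exact Set.union_subset_union_right Γ (Set.subset_insert A F)
    · rintro C (rfl | hC)
      · exact Or.inr (Set.mem_insert _ _)
      · rcases h2 hC with h | h
        · exact Or.inl h
        · exact Or.inr (Set.mem_insert_of_mem _ h)

theorem inv_insert_right2 {L₂ : Set ℕ} {Γ Δ : Set Fm} {S : Set Fm × Set Fm}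
    (hS : StInv L₂ Γ Δ S) {A B : Fm} (hA : InSyn L₂ A) (hB : InSyn L₂ B)
    (hund : ¬ SetDer S.1 (insert A (insert B S.2))) :
    StInv L₂ Γ Δ (S.1, insert A (insert B S.2)) := by
  refine ⟨?_, ?_, hund⟩
  · rintro C (hC | hC)
    · exact hS.syn C (Or.inl hC)
    · rcases hC with rfl | rfl | hC
      · exact hA
      · exact hB
      · exact hS.syn C (Or.inr hC)
  · obtain ⟨F, hF, h1, h2⟩ := hS.fin
    refine ⟨insert A (insert B F), (hF.insert B).insert A, h1.trans ?_, ?_⟩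
    · exact Set.union_subset_union_right Γ (subset_insert2 A B F)
    · rintro C (rfl | rfl | hC)
      · exact Or.inr (Set.mem_insert _ _)
      · exact Or.inr (Set.mem_insert_of_mem _ (Set.mem_insert _ _))
      · rcases h2 hC with h | h
        · exact Or.inl h
        · exact Or.inr (Set.mem_insert_of_mem _ (Set.mem_insert_of_mem _ h))

theorem inv_insert_left {L₂ : Set ℕ} {Γ Δ : Set Fm} {S : Set Fm × Set Fm}
    (hS : StInv L₂ Γ Δ S) {A : Fm} (hA : InSyn L₂ A)
    (hund : ¬ SetDer (insert A S.1) S.2) :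
    StInv L₂ Γ Δ (insert A S.1, S.2) := by
  refine ⟨?_, ?_, hund⟩
  · rintro C (hC | hC)
    · rcases hC with rfl | hC
      · exact hA
      · exact hS.syn C (Or.inl hC)
    · exact hS.syn C (Or.inr hC)
  · obtain ⟨F, hF, h1, h2⟩ := hS.fin
    refine ⟨insert A F, hF.insert A, ?_, h2.trans ?_⟩
    · rintro C (rfl | hC)
      · exact Or.inr (Set.mem_insert _ _)
      · rcases h1 hC with h | h
        · exact Or.inl h
        · exact Or.inr (Set.mem_insert_of_mem _ h)
    · exact Set.union_subset_union_right Δ (Set.subset_insert A F)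

theorem inv_insert_left2 {L₂ : Set ℕ} {Γ Δ : Set Fm} {S : Set Fm × Set Fm}
    (hS : StInv L₂ Γ Δ S) {A B : Fm} (hA : InSyn L₂ A) (hB : InSyn L₂ B)
    (hund : ¬ SetDer (insert A (insert B S.1)) S.2) :
    StInv L₂ Γ Δ (insert A (insert B S.1), S.2) := by
  refine ⟨?_, ?_, hund⟩
  · rintro C (hC | hC)
    · rcases hC with rfl | rfl | hC
      · exact hA
      · exact hB
      · exact hS.syn C (Or.inl hC)
    · exact hS.syn C (Or.inr hC)
  · obtain ⟨F, hF, h1, h2⟩ := hS.fin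
    refine ⟨insert A (insert B F), (hF.insert B).insert A, ?_, h2.trans ?_⟩
    · rintro C (rfl | rfl | hC)
      · exact Or.inr (Set.mem_insert _ _)
      · exact Or.inr (Set.mem_insert_of_mem _ (Set.mem_insert _ _))
      · rcases h1 hC with h | h
        · exact Or.inl h
        · exact Or.inr (Set.mem_insert_of_mem _ (Set.mem_insert_of_mem _ h))
    · exact Set.union_subset_union_right Δ (subset_insert2 A B F)

theorem subst_insyn {L₂ : Set ℕ} {B : Fm} {x z : ℕ}
    (hB : Fm.vars B ⊆ L₂) (hz : z ∈ L₂) :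
    InSyn L₂ (B.subst x (.var z)) := by
  intro y hy
  rcases fm_subst_vars B x (.var z) hy with h | h
  · exact hB h
  · rcases h with rfl
    exact hz

theorem inv_step {L₁ L₂ : Set ℕ} {Γ Δ : Set Fm}
    (hsub : L₁ ⊆ L₂) (hfresh : (L₂ \ L₁).Infinite)
    (hΓ : ∀ A ∈ Γ, InSyn L₁ A) (hΔ : ∀ A ∈ Δ, InSyn L₁ A)
    {S : Set Fm × Set Fm} (hS : StInv L₂ Γ Δ S) (A : Fm) :
    StInv L₂ Γ Δ (step L₂ S A) := by
  by_cases h1 : InSyn L₂ A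
  · have hne := fresh_ne hsub hfresh hΓ hΔ hS A
    have hz := freshVar_spec hne
    set z := freshVar L₂ S.1 S.2 A with hzdef
    have hz1 : z ∈ L₂ := hz.1
    have hzΓ : ∀ C ∈ S.1, z ∉ C.vars := fun C hC hv => hz.2 (Or.inl ⟨C, Or.inl hC, hv⟩)
    have hzΔ : ∀ C ∈ S.2, z ∉ C.vars := fun C hC hv => hz.2 (Or.inl ⟨C, Or.inr hC, hv⟩)
    have hzA : z ∉ A.vars := fun hv => hz.2 (Or.inr hv)
    by_cases h2 : SetDer (insert A S.1) S.2
    · have hund' : ¬ SetDer S.1 (insert A S.2) := fun hc => hS.und (setDer_cut hc h2)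
      cases A with
      | allC x B =>
        have hBsyn : InSyn L₂ (B.subst x (.var z)) :=
          subst_insyn (fun y hy => h1 (Set.mem_insert_of_mem x hy)) hz1
        have hund2 := step_allC hund' hzΓ hzΔ hzA
        simp only [step, h1, h2, if_true, ite_true]
        exact inv_insert_right2 hS h1 hBsyn hund2
      | atom P ts =>
        simp only [step, h1, h2, if_true, ite_true]
        exact inv_insert_right hS h1 hund'
      | bot =>
        simp only [step, h1, h2, if_true, ite_true]
        exact inv_insert_right hS h1 hund'
      | and B C =>
        simp only [step, h1, h2, if_true, ite_true]
        exact inv_insert_right hS h1 hund'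
      | or B C =>
        simp only [step, h1, h2, if_true, ite_true]
        exact inv_insert_right hS h1 hund'
      | impI B C =>
        simp only [step, h1, h2, if_true, ite_true]
        exact inv_insert_right hS h1 hund'
      | impC B C =>
        simp only [step, h1, h2, if_true, ite_true]
        exact inv_insert_right hS h1 hund'
      | allI x B =>
        simp only [step, h1, h2, if_true, ite_true]
        exact inv_insert_right hS h1 hund'
      | ex x B =>
        simp only [step, h1, h2, if_true, ite_true]
        exact inv_insert_right hS h1 hund'
    · cases A with
      | ex x B =>
        have hBsyn : InSyn L₂ (B.subst x (.var z)) :=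
          subst_insyn (fun y hy => h1 (Set.mem_insert_of_mem x hy)) hz1
        have hund2 := step_ex h2 hzΓ hzΔ hzA
        simp only [step, h1, h2, if_true, ite_true, if_false, ite_false]
        exact inv_insert_left2 hS h1 hBsyn hund2
      | atom P ts =>
        simp only [step, h1, h2, if_true, ite_true, if_false, ite_false]
        exact inv_insert_left hS h1 h2
      | bot =>
        simp only [step, h1, h2, if_true, ite_true, if_false, ite_false]
        exact inv_insert_left hS h1 h2
      | and B C =>
        simp only [step, h1, h2, if_true, ite_true, if_false, ite_false]
        exact inv_insert_left hS h1 h2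
      | or B C =>
        simp only [step, h1, h2, if_true, ite_true, if_false, ite_false]
        exact inv_insert_left hS h1 h2
      | impI B C =>
        simp only [step, h1, h2, if_true, ite_true, if_false, ite_false]
        exact inv_insert_left hS h1 h2
      | impC B C =>
        simp only [step, h1, h2, if_true, ite_true, if_false, ite_false]
        exact inv_insert_left hS h1 h2
      | allI x B =>
        simp only [step, h1, h2, if_true, ite_true, if_false, ite_false]
        exact inv_insert_left hS h1 h2
      | allC x B =>
        simp only [step, h1, h2, if_true, ite_true, if_false, ite_false]
        exact inv_insert_left hS h1 h2
  · simp only [step, h1, if_false, ite_false]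
    exact hS

theorem inv_stages {L₁ L₂ : Set ℕ} {Γ Δ : Set Fm}
    (hsub : L₁ ⊆ L₂) (hfresh : (L₂ \ L₁).Infinite)
    (hΓ : ∀ A ∈ Γ, InSyn L₁ A) (hΔ : ∀ A ∈ Δ, InSyn L₁ A)
    (hund : ¬ SetDer Γ Δ) (e : ℕ → Fm) :
    ∀ n, StInv L₂ Γ Δ (stages L₂ e Γ Δ n) := by
  intro n
  induction n with
  | zero =>
    refine ⟨?_, ⟨∅, Set.finite_empty, fun _ hx => Or.inl hx, fun _ hx => Or.inl hx⟩, hund⟩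
    rintro A (hA | hA)
    · exact fun y hy => hsub (hΓ A hA hy)
    · exact fun y hy => hsub (hΔ A hA hy)
  | succ n ih => exact inv_step hsub hfresh hΓ hΔ ih (e n)

/-! ### Remaining helpers -/

theorem list_mem_iUnion {α : Type*} {f : ℕ → Set α}
    (hmono : ∀ m n, m ≤ n → f m ⊆ f n) (l : List α)
    (hl : ∀ C ∈ l, C ∈ ⋃ n, f n) : ∃ N, ∀ C ∈ l, C ∈ f N := by
  induction l with
  | nil => exact ⟨0, by simp⟩
  | cons A l ih =>
    obtain ⟨N, hN⟩ := ih (fun C hC => hl C (by simp [hC]))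
    obtain ⟨M, hM⟩ := Set.mem_iUnion.1 (hl A (by simp))
    refine ⟨max N M, fun C hC => ?_⟩
    rcases List.mem_cons.1 hC with rfl | hC
    · exact hmono M _ (le_max_right _ _) hM
    · exact hmono N _ (le_max_left _ _) (hN C hC)

theorem step_toR (L₂ : Set ℕ) (S : Set Fm × Set Fm) (A : Fm)
    (hA : InSyn L₂ A) (h2 : SetDer (insert A S.1) S.2) : A ∈ (step L₂ S A).2 := by
  cases A <;>
    simp only [step, hA, h2, if_true, ite_true] <;>
    exact Set.mem_insert _ _

theorem step_toL (L₂ : Set ℕ) (S : Set Fm × Set Fm) (A : Fm)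
    (hA : InSyn L₂ A) (h2 : ¬ SetDer (insert A S.1) S.2) : A ∈ (step L₂ S A).1 := by
  cases A <;>
    simp only [step, hA, h2, if_true, ite_true, if_false, ite_false] <;>
    exact Set.mem_insert _ _

theorem step_ex_shape {L₂ : Set ℕ} {S : Set Fm × Set Fm} {x : ℕ} {B : Fm}
    (hA : InSyn L₂ (Fm.ex x B)) (h2 : ¬ SetDer (insert (Fm.ex x B) S.1) S.2) :
    step L₂ S (Fm.ex x B) =
      (insert (Fm.ex x B)
        (insert (B.subst x (.var (freshVar L₂ S.1 S.2 (Fm.ex x B)))) S.1), S.2) := by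
  simp only [step, hA, h2, if_true, ite_true, if_false, ite_false]

theorem step_allC_shape {L₂ : Set ℕ} {S : Set Fm × Set Fm} {x : ℕ} {B : Fm}
    (hA : InSyn L₂ (Fm.allC x B)) (h2 : SetDer (insert (Fm.allC x B) S.1) S.2) :
    step L₂ S (Fm.allC x B) =
      (S.1, insert (Fm.allC x B)
        (insert (B.subst x (.var (freshVar L₂ S.1 S.2 (Fm.allC x B)))) S.2)) := by
  simp only [step, hA, h2, if_true, ite_true]
/-- Lindenbaum-type extension lemma: if a sequent `Γ ⇒ Δ` of
`L₁`-formulas is not derivable in G(FOC+J) and `L₂` extends `L₁` by a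
countably infinite set of fresh variables, then there is a prime
`L₂`-complete pair `(Γ*,Δ*)` extending `(Γ,Δ)`, with `Γ* ∪ Δ*` all
`L₂`-formulas. -/
theorem extension_lemma (L₁ L₂ : Set ℕ)
    (hsub : L₁ ⊆ L₂) (hfresh : (L₂ \ L₁).Infinite)
    (Γ Δ : Set Fm)
    (hΓ : ∀ A ∈ Γ, InSyn L₁ A) (hΔ : ∀ A ∈ Δ, InSyn L₁ A)
    (h : ¬ SetDer Γ Δ) :
    ∃ Γ' Δ' : Set Fm, Γ ⊆ Γ' ∧ Δ ⊆ Δ' ∧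
      PrimePair L₂ Γ' Δ' ∧ LComplete L₂ Γ' Δ' := by
    classical
  set SS := stages L₂ fmEnum Γ Δ with hSSdef
  have hinv : ∀ n, StInv L₂ Γ Δ (SS n) := inv_stages hsub hfresh hΓ hΔ h fmEnum
  set Γ' := ⋃ n, (SS n).1 with hΓ'def
  set Δ' := ⋃ n, (SS n).2 with hΔ'def
  have hmono1 : ∀ m n, m ≤ n → (SS m).1 ⊆ (SS n).1 :=
    fun m n hmn => stages_mono1 L₂ fmEnum Γ Δ hmn
  have hmono2 : ∀ m n, m ≤ n → (SS m).2 ⊆ (SS n).2 :=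
    fun m n hmn => stages_mono2 L₂ fmEnum Γ Δ hmn
  have hGsub : Γ ⊆ Γ' := fun A hA => Set.mem_iUnion.2 ⟨0, hA⟩
  have hDsub : Δ ⊆ Δ' := fun A hA => Set.mem_iUnion.2 ⟨0, hA⟩
  have hund' : ¬ SetDer Γ' Δ' := by
    rintro ⟨G, D, hG, hD, hd⟩
    obtain ⟨N₁, hN₁⟩ := list_mem_iUnion hmono1 G hG
    obtain ⟨N₂, hN₂⟩ := list_mem_iUnion hmono2 D hD
    exact (hinv (max N₁ N₂)).und ⟨G, D,
      fun C hC => hmono1 N₁ _ (le_max_left _ _) (hN₁ C hC),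
      fun C hC => hmono2 N₂ _ (le_max_right _ _) (hN₂ C hC), hd⟩
  have hsyn : ∀ A ∈ Γ' ∪ Δ', InSyn L₂ A := by
    rintro A (hA | hA)
    · obtain ⟨n, hn⟩ := Set.mem_iUnion.1 hA
      exact (hinv n).syn A (Or.inl hn)
    · obtain ⟨n, hn⟩ := Set.mem_iUnion.1 hA
      exact (hinv n).syn A (Or.inr hn)
  have hcompl : ∀ A, InSyn L₂ A → A ∈ Γ' ∪ Δ' := by
    intro A hA
    obtain ⟨k, rfl⟩ := fmEnum_surj A
    rcases mem_step L₂ (SS k) (fmEnum k) hA with h' | h'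
    · exact Or.inl (Set.mem_iUnion.2 ⟨k + 1, h'⟩)
    · exact Or.inr (Set.mem_iUnion.2 ⟨k + 1, h'⟩)
  have hdisj : ∀ A, A ∈ Γ' → A ∈ Δ' → False := by
    intro A h1 h2
    exact hund' ⟨[A], [A], by simpa using h1, by simpa using h2, Der.id A⟩
  refine ⟨Γ', Δ', hGsub, hDsub, ⟨hsyn, ?_, hund', ?_, ?_, ?_⟩, ?_⟩
  · -- theory
    intro A hA hder
    rcases hcompl A hA with h' | h'
    · exact h'
    · exfalso
      obtain ⟨G, D, hG, hD, hd⟩ := hder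
      exact hund' ⟨G, D, hG,
        fun C hC => by rw [Set.mem_singleton_iff.1 (hD C hC)]; exact h', hd⟩
  · -- prime
    intro A B hmem
    by_contra hcon
    push_neg at hcon
    have hAL : InSyn L₂ A := fun y hy => hsyn _ (Or.inl hmem) (Or.inl hy)
    have hBL : InSyn L₂ B := fun y hy => hsyn _ (Or.inl hmem) (Or.inr hy)
    have hAΔ : A ∈ Δ' := by
      rcases hcompl A hAL with h' | h'
      · exact absurd h' hcon.1
      · exact h'
    have hBΔ : B ∈ Δ' := by
      rcases hcompl B hBL with h' | h'
      · exact absurd h' hcon.2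
      · exact h'
    refine hund' ⟨[.or A B], [A, B], by simpa using hmem, ?_, der_or_pair A B⟩
    intro C hC
    rcases List.mem_cons.1 hC with rfl | hC
    · exact hAΔ
    · rcases List.mem_cons.1 hC with rfl | hC
      · exact hBΔ
      · simp at hC
  · -- exProp
    intro x B hmem
    have hA : InSyn L₂ (Fm.ex x B) := hsyn _ (Or.inl hmem)
    obtain ⟨k, hk⟩ := fmEnum_surj (Fm.ex x B)
    have hstep : SS (k + 1) = step L₂ (SS k) (Fm.ex x B) := by
      rw [show SS (k + 1) = step L₂ (SS k) (fmEnum k) from rfl, hk]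
    by_cases h2 : SetDer (insert (Fm.ex x B) (SS k).1) (SS k).2
    · exfalso
      have hmem2 : Fm.ex x B ∈ (SS (k + 1)).2 := by
        rw [hstep]; exact step_toR L₂ (SS k) _ hA h2
      exact hdisj _ hmem (Set.mem_iUnion.2 ⟨k + 1, hmem2⟩)
    · have hz := freshVar_spec (fresh_ne hsub hfresh hΓ hΔ (hinv k) (Fm.ex x B))
      refine ⟨.var (freshVar L₂ (SS k).1 (SS k).2 (Fm.ex x B)), ?_, ?_⟩
      · intro y hy
        rcases hy with rfl
        exact hz.1
      · refine Set.mem_iUnion.2 ⟨k + 1, ?_⟩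
        rw [hstep, step_ex_shape hA h2]
        exact Set.mem_insert_of_mem _ (Set.mem_insert _ _)
  · -- allCProp
    intro x B hmem
    have hA : InSyn L₂ (Fm.allC x B) := hsyn _ (Or.inr hmem)
    obtain ⟨k, hk⟩ := fmEnum_surj (Fm.allC x B)
    have hstep : SS (k + 1) = step L₂ (SS k) (Fm.allC x B) := by
      rw [show SS (k + 1) = step L₂ (SS k) (fmEnum k) from rfl, hk]
    by_cases h2 : SetDer (insert (Fm.allC x B) (SS k).1) (SS k).2
    · have hz := freshVar_spec (fresh_ne hsub hfresh hΓ hΔ (hinv k) (Fm.allC x B))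
      refine ⟨.var (freshVar L₂ (SS k).1 (SS k).2 (Fm.allC x B)), ?_, ?_⟩
      · intro y hy
        rcases hy with rfl
        exact hz.1
      · refine Set.mem_iUnion.2 ⟨k + 1, ?_⟩
        rw [hstep, step_allC_shape hA h2]
        exact Set.mem_insert_of_mem _ (Set.mem_insert _ _)
    · exfalso
      have hmem2 : Fm.allC x B ∈ (SS (k + 1)).1 := by
        rw [hstep]; exact step_toL L₂ (SS k) _ hA h2
      exact hdisj _ (Set.mem_iUnion.2 ⟨k + 1, hmem2⟩) hmem
  · -- LComplete
    exact Set.Subset.antisymm (fun A hA => hsyn A hA) (fun A hA => hcompl A hA)
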